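/- For every integer ℓ ≥ 1, the subgroup Γ_{ℓ+1} has infinite index in Γ_ℓ, where Γ_ℓ denotes the subgroup of SL₂(ℤ) generated by the matrices [[1,2^ℓ],[0,1]] and [[1,0],[2^ℓ,1]]. -/

import Mathlib

open Matrix

local notation "SL2Z" => Matrix.SpecialLinearGroup (Fin 2) ℤ

def V2 : Type := {v : Fin 2 → ℤ // v ≠ 0}

noncomputable instance : MulAction SL2Z V2 where
  smul g v := ⟨(g : Matrix (Fin 2) (Fin 2) ℤ).mulVec v.1, by
    intro h
    apply v.2
    have h2 := congrArg (fun w => ((g⁻¹ : SL2Z) : Matrix (Fin 2) (Fin 2) ℤ).mulVec w) h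
    simp only [Matrix.mulVec_mulVec, Matrix.mulVec_zero] at h2
    rw [← Matrix.SpecialLinearGroup.coe_mul, inv_mul_cancel, Matrix.SpecialLinearGroup.coe_one,
      Matrix.one_mulVec] at h2
    exact h2⟩
  one_smul v := Subtype.ext (by
    show ((1 : SL2Z) : Matrix (Fin 2) (Fin 2) ℤ).mulVec v.1 = v.1
    simp)
  mul_smul g h v := Subtype.ext (by
    show (((g * h : SL2Z)) : Matrix (Fin 2) (Fin 2) ℤ).mulVec v.1 =
      ((g : Matrix (Fin 2) (Fin 2) ℤ)).mulVec (((h : SL2Z) : Matrix (Fin 2) (Fin 2) ℤ).mulVec v.1)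
    rw [Matrix.mulVec_mulVec, Matrix.SpecialLinearGroup.coe_mul])

theorem smul_V2_coe (g : SL2Z) (v : V2) :
    (g • v).1 = (g : Matrix (Fin 2) (Fin 2) ℤ).mulVec v.1 := rfl

def Amat (m : ℤ) : SL2Z := ⟨!![1, m; 0, 1], by simp [Matrix.det_fin_two_of]⟩
def Bmat (m : ℤ) : SL2Z := ⟨!![1, 0; m, 1], by simp [Matrix.det_fin_two_of]⟩

def genAB (m : ℤ) : Bool → SL2Z := fun b => bif b then Amat m else Bmat m

theorem mulVec_fin_two (a b c d : ℤ) (v : Fin 2 → ℤ) :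
    (!![a,b;c,d]).mulVec v = ![a * v 0 + b * v 1, c * v 0 + d * v 1] := by
  funext i; fin_cases i <;> simp [Matrix.mulVec, dotProduct, Fin.sum_univ_two, Matrix.vecHead, Matrix.vecTail]

theorem Amat_inv_coe (m : ℤ) :
    (((Amat m)⁻¹ : SL2Z) : Matrix (Fin 2) (Fin 2) ℤ) = !![1, -m; 0, 1] := by
  rw [Matrix.SpecialLinearGroup.coe_inv]
  show (!![1, m; 0, 1] : Matrix (Fin 2) (Fin 2) ℤ).adjugate = _
  rw [Matrix.adjugate_fin_two]
  norm_num

theorem Bmat_inv_coe (m : ℤ) :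
    (((Bmat m)⁻¹ : SL2Z) : Matrix (Fin 2) (Fin 2) ℤ) = !![1, 0; -m, 1] := by
  rw [Matrix.SpecialLinearGroup.coe_inv]
  show (!![1, 0; m, 1] : Matrix (Fin 2) (Fin 2) ℤ).adjugate = _
  rw [Matrix.adjugate_fin_two]
  norm_num

theorem genAB_injective (m : ℤ) (hm : 2 ≤ m) :
    Function.Injective (FreeGroup.lift (genAB m)) := by
  classical
  have hXA : ∀ v : V2, v ∈ ({v : V2 | v.1 0 * v.1 1 > v.1 1 * v.1 1 ∨ v.1 1 = 0}) ↔
      (v.1 0 * v.1 1 > v.1 1 * v.1 1 ∨ v.1 1 = 0) := fun _ => Iff.rfl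
  apply FreeGroup.injective_lift_of_ping_pong (genAB m)
    (X := fun b => bif b then {v : V2 | v.1 0 * v.1 1 > v.1 1 * v.1 1 ∨ v.1 1 = 0}
      else {v : V2 | v.1 0 * v.1 1 ≥ v.1 0 * v.1 0})
    (Y := fun b => bif b then {v : V2 | v.1 0 * v.1 1 ≤ -(v.1 1 * v.1 1) ∧ v.1 1 ≠ 0}
      else {v : V2 | v.1 0 * v.1 1 < -(v.1 0 * v.1 0)})
  · -- nonempty
    intro i
    cases i
    · exact ⟨⟨![1, 2], by intro h; simpa using congrFun h 1⟩, by show (1:ℤ) * 1 ≤ 1 * 2; norm_num⟩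
    · exact ⟨⟨![2, 1], by intro h; simpa using congrFun h 0⟩, by show (1:ℤ) * 1 < 2 * 1 ∨ (1:ℤ) = 0; norm_num⟩
  · -- X pairwise disjoint
    have key : Disjoint ({v : V2 | v.1 0 * v.1 1 > v.1 1 * v.1 1 ∨ v.1 1 = 0})
        ({v : V2 | v.1 0 * v.1 1 ≥ v.1 0 * v.1 0}) := by
      rw [Set.disjoint_left]
      rintro v (h1 | h1) h2 <;> simp only [Set.mem_setOf_eq] at h2
      · nlinarith [sq_nonneg (v.1 0 - v.1 1), sq_nonneg (v.1 0 + v.1 1)]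
      · rw [h1, mul_zero] at h2
        have hx : v.1 0 = 0 := by nlinarith
        exact v.2 (by funext i; fin_cases i <;> simp [hx, h1])
    intro i j hij
    cases i <;> cases j <;> simp at hij ⊢
    · exact key.symm
    · exact key
  · -- Y pairwise disjoint
    have key : Disjoint ({v : V2 | v.1 0 * v.1 1 ≤ -(v.1 1 * v.1 1) ∧ v.1 1 ≠ 0})
        ({v : V2 | v.1 0 * v.1 1 < -(v.1 0 * v.1 0)}) := by
      rw [Set.disjoint_left]
      rintro v ⟨h1, h1'⟩ h2
      simp only [Set.mem_setOf_eq] at h2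
      nlinarith [sq_nonneg (v.1 0 + v.1 1)]
    intro i j hij
    cases i <;> cases j <;> simp at hij ⊢
    · exact key.symm
    · exact key
  · -- X i disjoint Y j
    intro i j
    cases i <;> cases j <;> rw [Set.disjoint_left] <;> intro v h1 h2 <;>
      simp only [cond_true, cond_false, Set.mem_setOf_eq] at h1 h2
    · -- X_B vs Y_B
      nlinarith [sq_nonneg (v.1 0)]
    · -- X_B vs Y_A
      obtain ⟨h2, h2'⟩ := h2
      have : 0 < v.1 1 * v.1 1 := mul_self_pos.mpr h2'
      nlinarith [sq_nonneg (v.1 0)]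
    · -- X_A vs Y_B
      rcases h1 with h1 | h1
      · nlinarith [sq_nonneg (v.1 0), sq_nonneg (v.1 1)]
      · rw [h1, mul_zero] at h2; nlinarith [sq_nonneg (v.1 0)]
    · -- X_A vs Y_A
      obtain ⟨h2, h2'⟩ := h2
      have : 0 < v.1 1 * v.1 1 := mul_self_pos.mpr h2'
      rcases h1 with h1 | h1
      · nlinarith
      · exact h2' h1
  · -- hX : a i • (Y i)ᶜ ⊆ X i
    intro i
    cases i
    · -- B : v ∉ Y_B → B v ∈ X_B
      rintro w ⟨u, hu, rfl⟩
      simp only [Set.mem_compl_iff, cond_true, cond_false, Set.mem_setOf_eq] at hu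
      show ((genAB m false) • u) ∈ {v : V2 | v.1 0 * v.1 1 ≥ v.1 0 * v.1 0}
      have hc : ((genAB m false) • u).1 = ![1 * u.1 0 + 0 * u.1 1, m * u.1 0 + 1 * u.1 1] := by
        rw [smul_V2_coe]
        show (!![1, 0; m, 1] : Matrix (Fin 2) (Fin 2) ℤ).mulVec u.1 = _
        rw [_root_.mulVec_fin_two]
      simp only [Set.mem_setOf_eq, hc, Matrix.cons_val_zero, Matrix.cons_val_one,
        Matrix.head_cons]
      nlinarith [sq_nonneg (u.1 0)]
    · -- A : v ∉ Y_A → A v ∈ X_A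
      rintro w ⟨u, hu, rfl⟩
      simp only [Set.mem_compl_iff, cond_true, cond_false, Set.mem_setOf_eq, not_and_or, not_le, not_not] at hu
      show ((genAB m true) • u) ∈ {v : V2 | v.1 0 * v.1 1 > v.1 1 * v.1 1 ∨ v.1 1 = 0}
      have hc : ((genAB m true) • u).1 = ![1 * u.1 0 + m * u.1 1, 0 * u.1 0 + 1 * u.1 1] := by
        rw [smul_V2_coe]
        show (!![1, m; 0, 1] : Matrix (Fin 2) (Fin 2) ℤ).mulVec u.1 = _
        rw [_root_.mulVec_fin_two]
      simp only [Set.mem_setOf_eq, hc, Matrix.cons_val_zero, Matrix.cons_val_one,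
        Matrix.head_cons]
      rcases hu with hu | hu
      · rcases eq_or_ne (u.1 1) 0 with hy | hy
        · right; simp [hy]
        · left
          have hy2 : 0 < u.1 1 * u.1 1 := mul_self_pos.mpr hy
          nlinarith
      · right; simp [hu]
  · -- hY : a⁻¹ i • (X i)ᶜ ⊆ Y i
    intro i
    cases i
    · -- B⁻¹ : v ∉ X_B → B⁻¹ v ∈ Y_B
      rintro w ⟨u, hu, rfl⟩
      simp only [Set.mem_compl_iff, cond_true, cond_false, Set.mem_setOf_eq, not_le] at hu
      show (((genAB m)⁻¹ false) • u) ∈ {v : V2 | v.1 0 * v.1 1 < -(v.1 0 * v.1 0)}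
      have hc : (((genAB m)⁻¹ false) • u).1 = ![1 * u.1 0 + 0 * u.1 1, -m * u.1 0 + 1 * u.1 1] := by
        rw [Pi.inv_apply, smul_V2_coe]
        show (((Bmat m)⁻¹ : SL2Z) : Matrix (Fin 2) (Fin 2) ℤ).mulVec u.1 = _
        rw [Bmat_inv_coe, _root_.mulVec_fin_two]
      simp only [Set.mem_setOf_eq, hc, Matrix.cons_val_zero, Matrix.cons_val_one,
        Matrix.head_cons]
      nlinarith [sq_nonneg (u.1 0)]
    · -- A⁻¹ : v ∉ X_A → A⁻¹ v ∈ Y_A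
      rintro w ⟨u, hu, rfl⟩
      simp only [Set.mem_compl_iff, cond_true, cond_false, Set.mem_setOf_eq, not_or, not_lt] at hu
      obtain ⟨hu1, hu2⟩ := hu
      show (((genAB m)⁻¹ true) • u) ∈ {v : V2 | v.1 0 * v.1 1 ≤ -(v.1 1 * v.1 1) ∧ v.1 1 ≠ 0}
      have hc : (((genAB m)⁻¹ true) • u).1 = ![1 * u.1 0 + -m * u.1 1, 0 * u.1 0 + 1 * u.1 1] := by
        rw [Pi.inv_apply, smul_V2_coe]
        show (((Amat m)⁻¹ : SL2Z) : Matrix (Fin 2) (Fin 2) ℤ).mulVec u.1 = _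
        rw [Amat_inv_coe, _root_.mulVec_fin_two]
      simp only [Set.mem_setOf_eq, hc, Matrix.cons_val_zero, Matrix.cons_val_one,
        Matrix.head_cons]
      have hy2 : 0 < u.1 1 * u.1 1 := mul_self_pos.mpr hu2
      constructor
      · nlinarith
      · simpa using hu2



/-- For `ℓ ≥ 0`, `Γ ℓ` is the subgroup of `SL₂(ℤ)` generated by the matrices
`[[1,2^ℓ],[0,1]]` and `[[1,0],[2^ℓ,1]]`. -/
def GammaSL2 (ℓ : ℕ) : Subgroup (Matrix.SpecialLinearGroup (Fin 2) ℤ) :=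
  Subgroup.closure
    {g : Matrix.SpecialLinearGroup (Fin 2) ℤ |
      (g : Matrix (Fin 2) (Fin 2) ℤ) = !![1, 2 ^ ℓ; 0, 1] ∨
      (g : Matrix (Fin 2) (Fin 2) ℤ) = !![1, 0; 2 ^ ℓ, 1]}

/-- For every integer `ℓ ≥ 1`, the subgroup `Γ_{ℓ+1}` has infinite index in
`Γ_ℓ` (the relative index, i.e. the cardinality of the coset space, is
infinite, which is encoded by `relindex = 0`). -/
theorem Gamma_succ_infinite_index_in_Gamma (ℓ : ℕ) (hℓ : 1 ≤ ℓ) :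
    (GammaSL2 (ℓ + 1)).relIndex (GammaSL2 ℓ) = 0 := by
  classical
  have hm : (2 : ℤ) ≤ 2 ^ ℓ := by
    calc (2 : ℤ) = 2 ^ 1 := (pow_one 2).symm
    _ ≤ 2 ^ ℓ := pow_le_pow_right₀ (by norm_num) hℓ
  set L : FreeGroup Bool →* Matrix.SpecialLinearGroup (Fin 2) ℤ :=
    FreeGroup.lift (genAB (2 ^ ℓ)) with hL
  have hinj : Function.Injective L := genAB_injective _ hm
  have hrange : L.range = GammaSL2 ℓ := by
    rw [hL, FreeGroup.range_lift_eq_closure]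
    unfold GammaSL2
    congr 1
    ext g
    constructor
    · rintro ⟨b, rfl⟩
      cases b
      · right; rfl
      · left; rfl
    · rintro (h | h)
      · exact ⟨true, Subtype.ext h.symm⟩
      · exact ⟨false, Subtype.ext h.symm⟩
  set e : FreeGroup Bool ≃* GammaSL2 ℓ :=
    (MonoidHom.ofInjective hinj).trans (MulEquiv.subgroupCongr hrange) with he
  have hecoe : ∀ x : FreeGroup Bool, ((e x : GammaSL2 ℓ) : Matrix.SpecialLinearGroup (Fin 2) ℤ) = L x := by
    intro x
    rw [he]
    rfl
  set ψ : FreeGroup Bool →* DihedralGroup 0 :=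
    FreeGroup.lift (fun b : Bool => DihedralGroup.sr (bif b then 0 else 1)) with hψ
  set φ : (GammaSL2 ℓ) →* DihedralGroup 0 := ψ.comp e.symm.toMonoidHom with hφ
  have hφe : ∀ x : FreeGroup Bool, φ (e x) = ψ x := by
    intro x
    rw [hφ]
    simp
  -- the generators of `GammaSL2 ℓ`
  have hAmem : Amat (2 ^ ℓ) ∈ GammaSL2 ℓ := Subgroup.subset_closure (Or.inl rfl)
  have hBmem : Bmat (2 ^ ℓ) ∈ GammaSL2 ℓ := Subgroup.subset_closure (Or.inr rfl)
  have heA : e (FreeGroup.of true) = ⟨Amat (2 ^ ℓ), hAmem⟩ := by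
    apply Subtype.ext
    rw [hecoe, hL]
    simp [genAB]
  have heB : e (FreeGroup.of false) = ⟨Bmat (2 ^ ℓ), hBmem⟩ := by
    apply Subtype.ext
    rw [hecoe, hL]
    simp [genAB]
  have hφA : φ ⟨Amat (2 ^ ℓ), hAmem⟩ = DihedralGroup.sr 0 := by
    rw [← heA, hφe, hψ]
    simp
  have hφB : φ ⟨Bmat (2 ^ ℓ), hBmem⟩ = DihedralGroup.sr 1 := by
    rw [← heB, hφe, hψ]
    simp
  -- Gamma (ℓ+1) is generated by the squares
  have hA2 : Amat (2 ^ ℓ) * Amat (2 ^ ℓ) =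
      (⟨!![1, 2 ^ (ℓ+1); 0, 1], by simp [Matrix.det_fin_two_of]⟩ :
        Matrix.SpecialLinearGroup (Fin 2) ℤ) := by
    apply Subtype.ext
    show (!![1, 2 ^ ℓ; 0, 1] : Matrix (Fin 2) (Fin 2) ℤ) * !![1, 2 ^ ℓ; 0, 1] = _
    rw [Matrix.mul_fin_two]
    norm_num [pow_succ]
    ring_nf
  have hB2 : Bmat (2 ^ ℓ) * Bmat (2 ^ ℓ) =
      (⟨!![1, 0; 2 ^ (ℓ+1), 1], by simp [Matrix.det_fin_two_of]⟩ :
        Matrix.SpecialLinearGroup (Fin 2) ℤ) := by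
    apply Subtype.ext
    show (!![1, 0; 2 ^ ℓ, 1] : Matrix (Fin 2) (Fin 2) ℤ) * !![1, 0; 2 ^ ℓ, 1] = _
    rw [Matrix.mul_fin_two]
    norm_num [pow_succ]
    ring_nf
  have hsub : GammaSL2 (ℓ + 1) ≤ GammaSL2 ℓ := by
    rw [GammaSL2, Subgroup.closure_le]
    rintro g (hg | hg)
    · have : g = Amat (2 ^ ℓ) * Amat (2 ^ ℓ) := by
        rw [hA2]; exact Subtype.ext hg
      rw [this]; exact mul_mem hAmem hAmem
    · have : g = Bmat (2 ^ ℓ) * Bmat (2 ^ ℓ) := by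
        rw [hB2]; exact Subtype.ext hg
      rw [this]; exact mul_mem hBmem hBmem
  -- every element of Gamma (ℓ+1) is killed by φ
  have hker : ∀ g (hg : g ∈ GammaSL2 (ℓ + 1)), ∀ (h : g ∈ GammaSL2 ℓ), φ ⟨g, h⟩ = 1 := by
    intro g hg
    induction hg using Subgroup.closure_induction with
    | mem x hx =>
      intro h
      rcases hx with hx | hx
      · have hxval : (⟨x, h⟩ : GammaSL2 ℓ) = ⟨Amat (2 ^ ℓ), hAmem⟩ * ⟨Amat (2 ^ ℓ), hAmem⟩ := by
          apply Subtype.ext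
          show x = Amat (2 ^ ℓ) * Amat (2 ^ ℓ)
          rw [hA2]; exact Subtype.ext hx
        rw [hxval, _root_.map_mul, hφA]
        rw [DihedralGroup.sr_mul_sr]
        simp
      · have hxval : (⟨x, h⟩ : GammaSL2 ℓ) = ⟨Bmat (2 ^ ℓ), hBmem⟩ * ⟨Bmat (2 ^ ℓ), hBmem⟩ := by
          apply Subtype.ext
          show x = Bmat (2 ^ ℓ) * Bmat (2 ^ ℓ)
          rw [hB2]; exact Subtype.ext hx
        rw [hxval, _root_.map_mul, hφB]
        rw [DihedralGroup.sr_mul_sr]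
        simp
    | one =>
      intro h
      have : (⟨1, h⟩ : GammaSL2 ℓ) = 1 := rfl
      rw [this, _root_.map_one]
    | mul x y hx hy ihx ihy =>
      intro h
      have : (⟨x * y, h⟩ : GammaSL2 ℓ) = ⟨x, hsub hx⟩ * ⟨y, hsub hy⟩ := rfl
      rw [this, _root_.map_mul, ihx (hsub hx), ihy (hsub hy), one_mul]
    | inv x hx ihx =>
      intro h
      have : (⟨x⁻¹, h⟩ : GammaSL2 ℓ) = (⟨x, hsub hx⟩ : GammaSL2 ℓ)⁻¹ := rfl
      rw [this, map_inv, ihx (hsub hx), inv_one]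
  have hle : (GammaSL2 (ℓ + 1)).subgroupOf (GammaSL2 ℓ) ≤ φ.ker := by
    intro x hx
    rw [Subgroup.mem_subgroupOf] at hx
    rw [MonoidHom.mem_ker]
    have := hker x hx x.2
    simpa using this
  -- the kernel of φ has infinite index
  have hkerind : φ.ker.index = 0 := by
    rw [Subgroup.index_eq_card, Nat.card_congr (QuotientGroup.quotientKerEquivRange φ).toEquiv]
    have hinf : ((φ.range : Set (DihedralGroup 0))).Infinite := by
      apply Set.infinite_of_injective_forall_mem
        (f := fun n : ℕ => DihedralGroup.r (n : ZMod 0))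
      · intro a b hab
        simp only [DihedralGroup.r.injEq] at hab
        exact_mod_cast hab
      · intro n
        rw [SetLike.mem_coe, MonoidHom.mem_range]
        refine ⟨e ((FreeGroup.of true * FreeGroup.of false) ^ n), ?_⟩
        rw [hφe, map_pow, _root_.map_mul, hψ]
        simp only [FreeGroup.lift_apply_of, cond_true, cond_false, DihedralGroup.sr_mul_sr]
        norm_num [DihedralGroup.r_one_pow]
    have : Infinite ↥φ.range := hinf.to_subtype
    exact Nat.card_eq_zero_of_infinite
  have hdvd := Subgroup.index_dvd_of_le hle
  rw [hkerind] at hdvd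
  exact zero_dvd_iff.mp hdvd
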